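/- Let X = span{u, v} ⊆ ℚ^d be a 2-dimensional vector space, and for ℓ ∈ [d] let r_ℓ := (u(ℓ), v(ℓ)) ∈ ℚ². Then X is projective with respect to the base u, v (i.e. cone({r₁,…,r_d}) = cone({r_i, r_j}) for some i, j ∈ [d]) if and only if there exists a vector n ∈ ℚ² such that ⟨n, r_ℓ⟩ > 0 for all ℓ ∈ [d] with r_ℓ ≠ 0. -/

import Mathlib

def cone {d : ℕ} (X : Set (Fin d → ℚ)) : Set (Fin d → ℚ) :=
  {y | ∃ (k : ℕ) (c : Fin k → ℚ) (v : Fin k → (Fin d → ℚ)),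
    (∀ i, 0 ≤ c i) ∧ (∀ i, v i ∈ X) ∧ y = ∑ i, c i • v i}

/-- `X = span{u, v}` is projective w.r.t. the base `u, v` if the cone generated by the
vectors `r_ℓ = (u ℓ, v ℓ)` equals the cone generated by just two of them. -/
def projective {d : ℕ} (u v : Fin d → ℚ) : Prop :=
  ∃ i j : Fin d,
    cone (Set.range (fun ℓ => ![u ℓ, v ℓ])) = cone ({![u i, v i], ![u j, v j]} : Set (Fin 2 → ℚ))

lemma zero_mem_cone {d : ℕ} (S : Set (Fin d → ℚ)) : 0 ∈ cone S :=
  ⟨0, Fin.elim0, Fin.elim0, fun i => i.elim0, fun i => i.elim0, by simp⟩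

lemma smul_mem_cone {d : ℕ} {S : Set (Fin d → ℚ)} {y : Fin d → ℚ} {t : ℚ}
    (ht : 0 ≤ t) (hy : y ∈ cone S) : t • y ∈ cone S := by
  obtain ⟨k, c, v, hc, hv, rfl⟩ := hy
  exact ⟨k, fun i => t * c i, v, fun i => mul_nonneg ht (hc i), hv, by
    rw [Finset.smul_sum]; exact Finset.sum_congr rfl fun i _ => by rw [smul_smul]⟩

lemma add_mem_cone {d : ℕ} {S : Set (Fin d → ℚ)} {y z : Fin d → ℚ}
    (hy : y ∈ cone S) (hz : z ∈ cone S) : y + z ∈ cone S := by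
  obtain ⟨k, c, v, hc, hv, rfl⟩ := hy
  obtain ⟨k', c', v', hc', hv', rfl⟩ := hz
  refine ⟨k + k', Fin.append c c', Fin.append v v', ?_, ?_, ?_⟩
  · intro i
    refine Fin.addCases (fun i0 => ?_) (fun i0 => ?_) i
    · rw [Fin.append_left]; exact hc i0
    · rw [Fin.append_right]; exact hc' i0
  · intro i
    refine Fin.addCases (fun i0 => ?_) (fun i0 => ?_) i
    · rw [Fin.append_left]; exact hv i0
    · rw [Fin.append_right]; exact hv' i0
  · rw [Fin.sum_univ_add]
    congr 1 <;> exact Finset.sum_congr rfl fun i _ => by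
      simp [Fin.append_left, Fin.append_right]

lemma single_mem_cone {d : ℕ} {S : Set (Fin d → ℚ)} {x : Fin d → ℚ} (hx : x ∈ S) :
    x ∈ cone S :=
  ⟨1, fun _ => 1, fun _ => x, fun _ => zero_le_one, fun _ => hx, by simp⟩

lemma mem_cone_of_combo {d : ℕ} {S : Set (Fin d → ℚ)} {a b : Fin d → ℚ} {α β : ℚ}
    (ha : a ∈ S) (hb : b ∈ S) (hα : 0 ≤ α) (hβ : 0 ≤ β) : α • a + β • b ∈ cone S :=
  add_mem_cone (smul_mem_cone hα (single_mem_cone ha)) (smul_mem_cone hβ (single_mem_cone hb))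

lemma cone_subset_cone {d : ℕ} {S T : Set (Fin d → ℚ)} (h : ∀ x ∈ S, x ∈ cone T) :
    cone S ⊆ cone T := by
  rintro y ⟨k, c, v, hc, hv, rfl⟩
  exact Finset.sum_induction _ (· ∈ cone T) (fun a b ha hb => add_mem_cone ha hb)
    (zero_mem_cone T) (fun i _ => smul_mem_cone (hc i) (h _ (hv i)))

lemma cone_pair_elim {d : ℕ} {a b : Fin d → ℚ} {y : Fin d → ℚ}
    (hy : y ∈ cone ({a, b} : Set (Fin d → ℚ))) :
    ∃ α β : ℚ, 0 ≤ α ∧ 0 ≤ β ∧ y = α • a + β • b := by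
  obtain ⟨k, c, v, hc, hv, rfl⟩ := hy
  refine Finset.sum_induction _ (fun y => ∃ α β : ℚ, 0 ≤ α ∧ 0 ≤ β ∧ y = α • a + β • b)
    ?_ ⟨0, 0, le_refl _, le_refl _, by simp⟩ ?_
  · rintro p q ⟨α, β, hα, hβ, rfl⟩ ⟨α', β', hα', hβ', rfl⟩
    exact ⟨α + α', β + β', by positivity, by positivity, by module⟩
  · intro i _
    rcases hv i with h | h
    · exact ⟨c i, 0, hc i, le_refl _, by rw [h]; module⟩
    · exact ⟨0, c i, le_refl _, hc i, by rw [Set.mem_singleton_iff.mp h]; module⟩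

lemma repr2 (n a b x : Fin 2 → ℚ) (α β : ℚ)
    (hn : n 0 ^ 2 + n 1 ^ 2 ≠ 0)
    (e1 : n 0 * x 0 + n 1 * x 1 = α * (n 0 * a 0 + n 1 * a 1) + β * (n 0 * b 0 + n 1 * b 1))
    (e2 : n 0 * x 1 - n 1 * x 0 = α * (n 0 * a 1 - n 1 * a 0) + β * (n 0 * b 1 - n 1 * b 0)) :
    x = α • a + β • b := by
  funext k
  fin_cases k
  · show x 0 = (α • a + β • b) 0
    simp only [Pi.add_apply, Pi.smul_apply, smul_eq_mul]
    apply mul_left_cancel₀ hn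
    linear_combination n 0 * e1 - n 1 * e2
  · show x 1 = (α • a + β • b) 1
    simp only [Pi.add_apply, Pi.smul_apply, smul_eq_mul]
    apply mul_left_cancel₀ hn
    linear_combination n 1 * e1 + n 0 * e2

lemma scalar2 (Na Nb Nx Ma Mb Mx : ℚ)
    (ha : 0 < Na) (hb : 0 < Nb) (hx : 0 < Nx)
    (h1 : Ma * Nx ≤ Mx * Na) (h2 : Mx * Nb ≤ Mb * Nx) :
    ∃ α β : ℚ, 0 ≤ α ∧ 0 ≤ β ∧ Nx = α * Na + β * Nb ∧ Mx = α * Ma + β * Mb := by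
  have hD : 0 ≤ Na * Mb - Ma * Nb := by
    by_contra hD
    push_neg at hD
    nlinarith [mul_le_mul_of_nonneg_right h1 hb.le, mul_le_mul_of_nonneg_right h2 ha.le]
  rcases hD.eq_or_lt with hD0 | hDpos
  · have e : Mx * Na = Ma * Nx := by
      apply le_antisymm _ h1
      nlinarith [mul_le_mul_of_nonneg_right h2 ha.le]
    refine ⟨Nx / Na, 0, by positivity, le_refl _, ?_, ?_⟩
    · field_simp
      ring
    · field_simp
      linarith [e]
  · refine ⟨(Mb * Nx - Mx * Nb) / (Na * Mb - Ma * Nb), (Mx * Na - Ma * Nx) / (Na * Mb - Ma * Nb),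
      div_nonneg (sub_nonneg.2 h2) hDpos.le, div_nonneg (sub_nonneg.2 h1) hDpos.le, ?_, ?_⟩
    · rw [div_mul_eq_mul_div, div_mul_eq_mul_div, ← add_div, eq_div_iff hDpos.ne']
      ring
    · rw [div_mul_eq_mul_div, div_mul_eq_mul_div, ← add_div, eq_div_iff hDpos.ne']
      ring

lemma core2 (n a b x : Fin 2 → ℚ)
    (ha : 0 < n 0 * a 0 + n 1 * a 1) (hb : 0 < n 0 * b 0 + n 1 * b 1)
    (hx : 0 < n 0 * x 0 + n 1 * x 1)
    (h1 : (n 0 * a 1 - n 1 * a 0) * (n 0 * x 0 + n 1 * x 1)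
        ≤ (n 0 * x 1 - n 1 * x 0) * (n 0 * a 0 + n 1 * a 1))
    (h2 : (n 0 * x 1 - n 1 * x 0) * (n 0 * b 0 + n 1 * b 1)
        ≤ (n 0 * b 1 - n 1 * b 0) * (n 0 * x 0 + n 1 * x 1)) :
    ∃ α β : ℚ, 0 ≤ α ∧ 0 ≤ β ∧ x = α • a + β • b := by
  have hn : n 0 ^ 2 + n 1 ^ 2 ≠ 0 := by
    intro h
    have h0 : n 0 = 0 := by nlinarith [sq_nonneg (n 0), sq_nonneg (n 1)]
    have h1' : n 1 = 0 := by nlinarith [sq_nonneg (n 0), sq_nonneg (n 1)]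
    rw [h0, h1'] at ha; simp at ha
  obtain ⟨α, β, hα, hβ, e1, e2⟩ := scalar2 _ _ _ _ _ _ ha hb hx h1 h2
  exact ⟨α, β, hα, hβ, repr2 n a b x α β hn e1 e2⟩

lemma indep_aux {d : ℕ} {u v : Fin d → ℚ} (huv : LinearIndependent ℚ ![u, v])
    (w : Fin 2 → ℚ) (hw : w ≠ 0) (h : ∀ ℓ, w 0 * u ℓ + w 1 * v ℓ = 0) : False := by
  have h2 := Fintype.linearIndependent_iff.mp huv w ?_
  · apply hw
    funext k
    fin_cases k
    · exact h2 0
    · exact h2 1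
  · rw [Fin.sum_univ_two]
    funext ℓ
    simpa [mul_comm] using h ℓ

theorem stmt2 (d : ℕ) (u v : Fin d → ℚ) (huv : LinearIndependent ℚ ![u, v]) :
    projective u v ↔
      ∃ n : Fin 2 → ℚ, ∀ ℓ : Fin d, (![u ℓ, v ℓ] ≠ 0) → 0 < ∑ k, n k * ![u ℓ, v ℓ] k := by
  classical
  constructor
  · rintro ⟨i, j, hEq⟩
    have key : ∀ ℓ, ∃ α β : ℚ, 0 ≤ α ∧ 0 ≤ β ∧
        ![u ℓ, v ℓ] = α • ![u i, v i] + β • ![u j, v j] := by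
      intro ℓ
      exact cone_pair_elim (hEq ▸ single_mem_cone (Set.mem_range_self ℓ))
    by_cases hD : u i * v j - v i * u j = 0
    · exfalso
      by_cases ha0 : (![u i, v i] : Fin 2 → ℚ) = 0
      · by_cases hb0 : (![u j, v j] : Fin 2 → ℚ) = 0
        · apply indep_aux huv ![1, 0] (by intro h; simpa using congrFun h 0)
          intro ℓ
          obtain ⟨α, β, _, _, hr⟩ := key ℓ
          rw [ha0, hb0] at hr
          simp only [smul_zero, add_zero] at hr
          have h0 := congrFun hr 0
          have h1 := congrFun hr 1
          simp at h0 h1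
          simp [h0, h1]
        · apply indep_aux huv ![-(v j), u j] ?_
          · intro ℓ
            obtain ⟨α, β, _, _, hr⟩ := key ℓ
            rw [ha0] at hr
            have h0 := congrFun hr 0
            have h1 := congrFun hr 1
            simp at h0 h1
            simp only [Matrix.cons_val_zero, Matrix.cons_val_one, Matrix.head_cons]
            linear_combination (-(v j)) * h0 + u j * h1
          · intro h
            apply hb0
            have h0 := congrFun h 0
            have h1 := congrFun h 1
            simp at h0 h1
            funext k
            fin_cases k <;> simp [h0, h1]
      · apply indep_aux huv ![-(v i), u i] ?_
        · intro ℓ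
          obtain ⟨α, β, _, _, hr⟩ := key ℓ
          have h0 := congrFun hr 0
          have h1 := congrFun hr 1
          simp at h0 h1
          simp only [Matrix.cons_val_zero, Matrix.cons_val_one, Matrix.head_cons]
          linear_combination (-(v i)) * h0 + u i * h1 + β * hD
        · intro h
          apply ha0
          have h0 := congrFun h 0
          have h1 := congrFun h 1
          simp at h0 h1
          funext k
          fin_cases k <;> simp [h0, h1]
    · refine ⟨![(v j - v i) / (u i * v j - v i * u j), (u i - u j) / (u i * v j - v i * u j)], ?_⟩
      intro ℓ hℓ
      obtain ⟨α, β, hα, hβ, hr⟩ := key ℓ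
      have h0 := congrFun hr 0
      have h1 := congrFun hr 1
      simp at h0 h1
      rw [Fin.sum_univ_two]
      simp only [Matrix.cons_val_zero, Matrix.cons_val_one, Matrix.head_cons]
      have heq : (v j - v i) / (u i * v j - v i * u j) * u ℓ
          + (u i - u j) / (u i * v j - v i * u j) * v ℓ = α + β := by
        rw [div_mul_eq_mul_div, div_mul_eq_mul_div, ← add_div, div_eq_iff hD]
        linear_combination (v j - v i) * h0 + (u i - u j) * h1
      rw [heq]
      rcases (add_nonneg hα hβ).eq_or_lt with he | hlt
      · exfalso
        apply hℓ
        have hα0 : α = 0 := by linarith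
        have hβ0 : β = 0 := by linarith
        rw [hr, hα0, hβ0]
        simp
      · exact hlt
  · rintro ⟨n, hn⟩
    have hn' : ∀ ℓ, ![u ℓ, v ℓ] ≠ 0 → 0 < n 0 * u ℓ + n 1 * v ℓ := by
      intro ℓ h
      simpa [Fin.sum_univ_two] using hn ℓ h
    set S := Finset.univ.filter (fun ℓ => (![u ℓ, v ℓ] : Fin 2 → ℚ) ≠ 0) with hSdef
    have hS : S.Nonempty := by
      have hu : u ≠ 0 := by
        have := huv.ne_zero 0
        simpa using this
      obtain ⟨ℓ₀, hℓ₀⟩ : ∃ ℓ, u ℓ ≠ 0 := by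
        by_contra h
        push_neg at h
        exact hu (funext h)
      refine ⟨ℓ₀, ?_⟩
      simp only [hSdef, Finset.mem_filter, Finset.mem_univ, true_and]
      intro h
      exact hℓ₀ (by simpa using congrFun h 0)
    set t : Fin d → ℚ := fun ℓ => (n 0 * v ℓ - n 1 * u ℓ) / (n 0 * u ℓ + n 1 * v ℓ) with htdef
    obtain ⟨i, hiS, hi⟩ := S.exists_min_image t hS
    obtain ⟨j, hjS, hj⟩ := S.exists_max_image t hS
    have hine : (![u i, v i] : Fin 2 → ℚ) ≠ 0 := by
      simpa [hSdef] using hiS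
    have hjne : (![u j, v j] : Fin 2 → ℚ) ≠ 0 := by
      simpa [hSdef] using hjS
    have hNa := hn' i hine
    have hNb := hn' j hjne
    refine ⟨i, j, Set.Subset.antisymm (cone_subset_cone ?_) (cone_subset_cone ?_)⟩
    · rintro x ⟨ℓ, rfl⟩
      show (![u ℓ, v ℓ] : Fin 2 → ℚ) ∈ cone {![u i, v i], ![u j, v j]}
      by_cases h0 : (![u ℓ, v ℓ] : Fin 2 → ℚ) = 0
      · rw [h0]; exact zero_mem_cone _
      · have hℓS : ℓ ∈ S := Finset.mem_filter.2 ⟨Finset.mem_univ _, h0⟩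
        have hNx := hn' ℓ h0
        have e1 : t i ≤ t ℓ := hi ℓ hℓS
        have e2 : t ℓ ≤ t j := hj ℓ hℓS
        rw [htdef] at e1 e2
        simp only at e1 e2
        rw [div_le_div_iff₀ hNa hNx] at e1
        rw [div_le_div_iff₀ hNx hNb] at e2
        obtain ⟨α, β, hα, hβ, hrepr⟩ := core2 n ![u i, v i] ![u j, v j] ![u ℓ, v ℓ]
          (by simpa using hNa) (by simpa using hNb) (by simpa using hNx)
          (by simpa using e1) (by simpa using e2)
        rw [hrepr]
        exact mem_cone_of_combo (Set.mem_insert _ _) (Set.mem_insert_iff.2 (Or.inr rfl)) hα hβ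
    · rintro x (rfl | rfl)
      · exact single_mem_cone (Set.mem_range_self i)
      · exact single_mem_cone (Set.mem_range_self j)
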